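/- For all real numbers a, b with 0 < a < b, the harmonic mean H = 2/(1/a + 1/b), arithmetic mean A = (a+b)/2 and logarithmic mean L = (b−a)/(log b − log a) satisfy (A − H)/(6 A^2) ≤ (1/2)(1/A + 1/H) − 1/L ≤ (A(A − H)/(6 H^2)) · (4/H − 3/A). -/

import Mathlib

open Real Set

noncomputable def Fl (x : ℝ) : ℝ :=
  (x-1)/(x+1) + (x^2-1)/(4*x) - (x-1)^3/(3*(x+1)^3) - Real.log x

lemma Fl_deriv (x : ℝ) (hx : 0 < x) :
    HasDerivAt Fl ((x-1)^4*(x^2+4*x+1)/(4*x^2*(x+1)^4)) x := by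
  have hx1 : (0:ℝ) < x + 1 := by linarith
  have h1 : HasDerivAt (fun x : ℝ => (x-1)/(x+1)) (2/(x+1)^2) x := by
    have : HasDerivAt (fun x : ℝ => (x-1)/(x+1)) _ x := ((hasDerivAt_id x).sub_const 1).div ((hasDerivAt_id x).add_const 1) (ne_of_gt hx1)
    simp only [id] at this
    convert this using 1
    field_simp
    ring
  have h2 : HasDerivAt (fun x : ℝ => (x^2-1)/(4*x)) ((x^2+1)/(4*x^2)) x := by
    have : HasDerivAt (fun x : ℝ => (x^2-1)/(4*x)) _ x := ((hasDerivAt_pow 2 x).sub_const 1).div ((hasDerivAt_id x).const_mul 4) (by positivity)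
    convert this using 1
    field_simp
    ring
  have h3 : HasDerivAt (fun x : ℝ => (x-1)^3/(3*(x+1)^3)) (2*(x-1)^2/(x+1)^4) x := by
    have : HasDerivAt (fun x : ℝ => (x-1)^3/(3*(x+1)^3)) _ x := (((hasDerivAt_id x).sub_const 1).pow 3).div
      ((((hasDerivAt_id x).add_const 1).pow 3).const_mul 3) (by show (3:ℝ) * (x+1)^3 ≠ 0; positivity)
    simp only [id, Pi.pow_apply] at this
    convert this using 1
    field_simp
    ring
  have h4 : HasDerivAt Real.log (1/x) x := by
    simpa using Real.hasDerivAt_log (ne_of_gt hx)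
  have : HasDerivAt Fl _ x := ((h1.add h2).sub h3).sub h4
  convert this using 1
  field_simp
  ring

lemma Fl_nonneg {x : ℝ} (hx : 1 ≤ x) : 0 ≤ Fl x := by
  have hmono : MonotoneOn Fl (Ici 1) := by
    apply monotoneOn_of_deriv_nonneg (convex_Ici 1)
    · intro y hy
      have hy0 : (0:ℝ) < y := lt_of_lt_of_le one_pos hy
      exact (Fl_deriv y hy0).differentiableAt.continuousAt.continuousWithinAt
    · intro y hy
      rw [interior_Ici] at hy
      exact ((Fl_deriv y (by linarith [mem_Ioi.mp hy])).differentiableAt).differentiableWithinAt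
    · intro y hy
      rw [interior_Ici] at hy
      have hy0 : (0:ℝ) < y := by have := mem_Ioi.mp hy; linarith
      rw [(Fl_deriv y hy0).deriv]
      positivity
  have h0 : Fl 1 = 0 := by simp [Fl]
  have := hmono (mem_Ici.mpr le_rfl) (mem_Ici.mpr hx) hx
  linarith [this, h0.symm ▸ this]


noncomputable def Gl (x : ℝ) : ℝ :=
  Real.log x - (x-1)/(x+1) - (x^2-1)/(4*x) + (x-1)^3*(x^3+1)/(48*x^3)

lemma Gl_deriv (x : ℝ) (hx : 0 < x) :
    HasDerivAt Gl ((x-1)^4*(x^4+4*x^3+4*x^2+4*x+1)/(16*x^4*(x+1)^2)) x := by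
  have hx1 : (0:ℝ) < x + 1 := by linarith
  have h1 : HasDerivAt (fun x : ℝ => (x-1)/(x+1)) (2/(x+1)^2) x := by
    have : HasDerivAt (fun x : ℝ => (x-1)/(x+1)) _ x := ((hasDerivAt_id x).sub_const 1).div ((hasDerivAt_id x).add_const 1) (ne_of_gt hx1)
    simp only [id] at this
    convert this using 1
    field_simp
    ring
  have h2 : HasDerivAt (fun x : ℝ => (x^2-1)/(4*x)) ((x^2+1)/(4*x^2)) x := by
    have : HasDerivAt (fun x : ℝ => (x^2-1)/(4*x)) _ x := ((hasDerivAt_pow 2 x).sub_const 1).div ((hasDerivAt_id x).const_mul 4) (by positivity)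
    convert this using 1
    field_simp
    ring
  have h3 : HasDerivAt (fun x : ℝ => (x-1)^3*(x^3+1)/(48*x^3))
      ((x-1)^2*(x^4+1)/(16*x^4)) x := by
    have : HasDerivAt (fun x : ℝ => (x-1)^3*(x^3+1)/(48*x^3)) _ x := ((((hasDerivAt_id x).sub_const 1).pow 3).mul ((hasDerivAt_pow 3 x).add_const 1)).div
      (((hasDerivAt_pow 3 x)).const_mul 48) (by positivity)
    simp only [id, Pi.pow_apply, Pi.mul_apply] at this
    convert this using 1
    field_simp
    ring
  have h4 : HasDerivAt Real.log (1/x) x := by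
    simpa using Real.hasDerivAt_log (ne_of_gt hx)
  have : HasDerivAt Gl _ x := ((h4.sub h1).sub h2).add h3
  convert this using 1
  field_simp
  ring

lemma Gl_nonneg {x : ℝ} (hx : 1 ≤ x) : 0 ≤ Gl x := by
  have hmono : MonotoneOn Gl (Ici 1) := by
    apply monotoneOn_of_deriv_nonneg (convex_Ici 1)
    · intro y hy
      have hy0 : (0:ℝ) < y := lt_of_lt_of_le one_pos hy
      exact (Gl_deriv y hy0).differentiableAt.continuousAt.continuousWithinAt
    · intro y hy
      rw [interior_Ici] at hy
      exact ((Gl_deriv y (by linarith [mem_Ioi.mp hy])).differentiableAt).differentiableWithinAt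
    · intro y hy
      rw [interior_Ici] at hy
      have hy0 : (0:ℝ) < y := by have := mem_Ioi.mp hy; linarith
      rw [(Gl_deriv y hy0).deriv]
      positivity
  have h0 : Gl 1 = 0 := by simp [Gl]
  have := hmono (mem_Ici.mpr le_rfl) (mem_Ici.mpr hx) hx
  linarith

lemma logUB (a b : ℝ) (ha : 0 < a) (hab : a < b) :
    Real.log b - Real.log a ≤
      (b-a)/(a+b) + (b^2-a^2)/(4*a*b) - (b-a)^3/(3*(a+b)^3) := by
  have hb : 0 < b := lt_trans ha hab
  have ht : (1:ℝ) ≤ b / a := (le_div_iff₀ ha).mpr (by linarith)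
  have key := Fl_nonneg ht
  unfold Fl at key
  rw [Real.log_div (ne_of_gt hb) (ne_of_gt ha)] at key
  have e : (b/a-1)/(b/a+1) + ((b/a)^2-1)/(4*(b/a)) - (b/a-1)^3/(3*(b/a+1)^3)
      = (b-a)/(a+b) + (b^2-a^2)/(4*a*b) - (b-a)^3/(3*(a+b)^3) := by
    have h1 : a + b ≠ 0 := by positivity
    field_simp
    ring
  linarith [e ▸ key]

lemma logLB (a b : ℝ) (ha : 0 < a) (hab : a < b) :
    (b-a)/(a+b) + (b^2-a^2)/(4*a*b) - (b-a)^3*(a^3+b^3)/(48*a^3*b^3) ≤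
      Real.log b - Real.log a := by
  have hb : 0 < b := lt_trans ha hab
  have ht : (1:ℝ) ≤ b / a := (le_div_iff₀ ha).mpr (by linarith)
  have key := Gl_nonneg ht
  unfold Gl at key
  rw [Real.log_div (ne_of_gt hb) (ne_of_gt ha)] at key
  have h1 : a + b ≠ 0 := by positivity
  have hab0' : (0:ℝ) < a + b := by linarith
  have e1 : (b/a-1)/(b/a+1) = (b-a)/(a+b) := by
    rw [div_eq_div_iff (by positivity) (by positivity)]
    field_simp
    ring_nf
  have e2 : ((b/a)^2-1)/(4*(b/a)) = (b^2-a^2)/(4*a*b) := by field_simp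
  have e3 : (b/a-1)^3*((b/a)^3+1)/(48*(b/a)^3) = (b-a)^3*(a^3+b^3)/(48*a^3*b^3) := by
    field_simp; ring
  rw [e1, e2, e3] at key
  linarith

/-- **Theorem 5, second part.** For `0 < a < b`, with `A = (a+b)/2`,
`H = 2/(1/a + 1/b)` and `L = (b-a)/(log b - log a)`, one has
`(A-H)/(6A²) ≤ (1/2)(1/A + 1/H) - 1/L ≤ (A(A-H)/(6H²))(4/H - 3/A)`. -/
theorem stmt_12 (a b A H L : ℝ) (ha : 0 < a) (hab : a < b)
    (hA : A = (a + b) / 2) (hH : H = 2 / (1 / a + 1 / b))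
    (hL : L = (b - a) / (Real.log b - Real.log a)) :
    (A - H) / (6 * A ^ 2) ≤ (1 / 2) * (1 / A + 1 / H) - 1 / L ∧
    (1 / 2) * (1 / A + 1 / H) - 1 / L ≤
      A * (A - H) / (6 * H ^ 2) * (4 / H - 3 / A) := by
  have hb : 0 < b := lt_trans ha hab
  have hba : 0 < b - a := by linarith
  have hab0 : (0:ℝ) < a + b := by linarith
  have eC : (1/2) * (1/A + 1/H) = 1/(a+b) + (a+b)/(4*a*b) := by
    rw [hA, hH]; field_simp; ring
  have eL : 1/L = (Real.log b - Real.log a)/(b-a) := by rw [hL, one_div_div]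
  have eLo : (A - H) / (6 * A ^ 2) = (b-a)^2/(3*(a+b)^3) := by
    rw [hA, hH]; field_simp; ring
  have eHi : A * (A - H) / (6 * H ^ 2) * (4 / H - 3 / A)
      = (b-a)^2*(a^3+b^3)/(48*a^3*b^3) := by
    rw [hA, hH]; field_simp; ring
  constructor
  · rw [eC, eL, eLo]
    have key := logUB a b ha hab
    have h4 := (div_le_div_iff_of_pos_right hba).mpr key
    have e5 : ((b-a)/(a+b) + (b^2-a^2)/(4*a*b) - (b-a)^3/(3*(a+b)^3)) / (b-a)
        = 1/(a+b) + (a+b)/(4*a*b) - (b-a)^2/(3*(a+b)^3) := by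
      field_simp
      ring
    linarith [e5 ▸ h4]
  · rw [eC, eL, eHi]
    have key := logLB a b ha hab
    have h4 := (div_le_div_iff_of_pos_right hba).mpr key
    have e5 : ((b-a)/(a+b) + (b^2-a^2)/(4*a*b) - (b-a)^3*(a^3+b^3)/(48*a^3*b^3)) / (b-a)
        = 1/(a+b) + (a+b)/(4*a*b) - (b-a)^2*(a^3+b^3)/(48*a^3*b^3) := by
      field_simp
      ring
    linarith [e5 ▸ h4]
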